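/- Let m > 0, J₀ > 0, and ξ, u₀ ∈ ℝ with ξu₀ ≠ 0, and set J = J₀ + mξ². For k > 0 put b(k) = kJ/(mJ₀) and c(k) = kξu₀/J₀. Then for all sufficiently large k the discriminant b(k)² − 4c(k) is positive, and the two real roots λ₂(k) = (−b(k) + √(b(k)² − 4c(k)))/2 and λ₃(k) = (−b(k) − √(b(k)² − 4c(k)))/2 of z² + b(k)z + c(k) satisfy λ₂(k) → −mξu₀/(J₀ + mξ²) and λ₃(k)/k → −(J₀ + mξ²)/(J₀ m) as k → ∞. Thus in the limit of large friction coefficient one eigenvalue decreases without bound while the other converges to the eigenvalue −mξu₀/(J₀+mξ²) of the steady-state solutions of the nonholonomic Chaplygin sleigh. -/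

import Mathlib

open Filter

/-- Large-friction asymptotics of the eigenvalues of the
linearized viscous-friction model of the Chaplygin sleigh (`η = 0`) at the
rectilinear motion.  With `J = J₀ + mξ²`, `b(k) = kJ/(mJ₀)`, `c(k) = kξu₀/J₀`,
for all sufficiently large `k` the discriminant `b(k)² − 4c(k)` is positive, and
the two real roots `λ₂(k) = (−b(k) + √(b(k)² − 4c(k)))/2` and
`λ₃(k) = (−b(k) − √(b(k)² − 4c(k)))/2` of `z² + b(k)z + c(k)` satisfy
`λ₂(k) → −mξu₀/(J₀ + mξ²)` and `λ₃(k)/k → −(J₀ + mξ²)/(J₀ m)` as `k → ∞`. -/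
theorem caratheodory_sleigh_large_friction_limit
    (m J₀ ξ u₀ J : ℝ) (hm : 0 < m) (hJ₀ : 0 < J₀) (hξu : ξ * u₀ ≠ 0)
    (hJ : J = J₀ + m * ξ ^ 2)
    (b c l₂ l₃ : ℝ → ℝ)
    (hb : ∀ k : ℝ, b k = k * J / (m * J₀))
    (hc : ∀ k : ℝ, c k = k * ξ * u₀ / J₀)
    (hl₂ : ∀ k : ℝ, l₂ k = (-b k + Real.sqrt (b k ^ 2 - 4 * c k)) / 2)
    (hl₃ : ∀ k : ℝ, l₃ k = (-b k - Real.sqrt (b k ^ 2 - 4 * c k)) / 2) :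
    (∀ᶠ k in atTop, 0 < b k ^ 2 - 4 * c k) ∧
    (∀ᶠ k in atTop, ∀ z : ℝ, (z = l₂ k ∨ z = l₃ k) → z ^ 2 + b k * z + c k = 0) ∧
    Tendsto l₂ atTop (nhds (-(m * ξ * u₀ / (J₀ + m * ξ ^ 2)))) ∧
    Tendsto (fun k => l₃ k / k) atTop (nhds (-((J₀ + m * ξ ^ 2) / (J₀ * m)))) := by
  have hJpos : 0 < J := by rw [hJ]; positivity
  set A : ℝ := J / (m * J₀) with hA
  set B : ℝ := 4 * ξ * u₀ / J₀ with hB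
  have hApos : 0 < A := by positivity
  -- rewrite b, c in terms of A, B
  have hb' : ∀ k : ℝ, b k = k * A := fun k => by rw [hb, hA]; ring
  have hc' : ∀ k : ℝ, 4 * c k = k * B := fun k => by rw [hc, hB]; ring
  -- discriminant formula
  have hdisc : ∀ k : ℝ, k ≠ 0 → b k ^ 2 - 4 * c k = k ^ 2 * (A ^ 2 - B / k) := by
    intro k hk
    rw [hb', show (4 : ℝ) * c k = k * B from hc' k]
    field_simp
  -- basic facts eventually
  have hev : ∀ᶠ k in atTop, 1 ≤ k ∧ 0 < A ^ 2 - B / k := by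
    filter_upwards [eventually_ge_atTop (max 1 (2 * |B| / A ^ 2))] with k hk
    have h1 : (1 : ℝ) ≤ k := le_trans (le_max_left _ _) hk
    have h2 : 2 * |B| / A ^ 2 ≤ k := le_trans (le_max_right _ _) hk
    have hk0 : 0 < k := lt_of_lt_of_le one_pos h1
    refine ⟨h1, ?_⟩
    have h3 : 2 * |B| ≤ k * A ^ 2 := (div_le_iff₀ (by positivity)).mp h2
    have h5 : B / k < A ^ 2 := by
      rw [div_lt_iff₀ hk0]
      nlinarith [abs_nonneg B, le_abs_self B, mul_pos hk0 (pow_pos hApos 2)]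
    linarith
  have hsqrt : ∀ k : ℝ, 1 ≤ k → 0 < A ^ 2 - B / k →
      Real.sqrt (b k ^ 2 - 4 * c k) = k * Real.sqrt (A ^ 2 - B / k) := by
    intro k h1 hX
    have hk0 : (0:ℝ) < k := lt_of_lt_of_le one_pos h1
    rw [hdisc k hk0.ne', Real.sqrt_mul (sq_nonneg k), Real.sqrt_sq hk0.le]
  refine ⟨?_, ?_, ?_, ?_⟩
  · filter_upwards [hev] with k ⟨h1, hX⟩
    rw [hdisc k (by linarith)]
    positivity
  · filter_upwards [hev] with k ⟨h1, hX⟩ z hz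
    have hD : 0 ≤ b k ^ 2 - 4 * c k := by
      rw [hdisc k (by linarith)]; positivity
    have hs := Real.sq_sqrt hD
    rcases hz with rfl | rfl
    · rw [hl₂]; linear_combination hs / 4
    · rw [hl₃]; linear_combination hs / 4
  · -- l₂ limit
    have heq : (fun k : ℝ => -B / (2 * (A + Real.sqrt (A ^ 2 - B / k)))) =ᶠ[atTop] l₂ := by
      filter_upwards [hev] with k ⟨h1, hX⟩
      have hk0 : (0:ℝ) < k := lt_of_lt_of_le one_pos h1
      set s := Real.sqrt (A ^ 2 - B / k) with hsdef
      have hs : s ^ 2 = A ^ 2 - B / k := Real.sq_sqrt hX.le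
      have hsn : 0 ≤ s := Real.sqrt_nonneg _
      have hden : 0 < A + s := by linarith
      have hs2 : s ^ 2 * k = A ^ 2 * k - B := by rw [hs]; field_simp
      show -B / (2 * (A + s)) = l₂ k
      rw [hl₂, hsqrt k h1 hX, hb' k, ← hsdef,
        div_eq_div_iff (by positivity) (by norm_num)]
      linear_combination (-2:ℝ) * hs2
    have hlim : Tendsto (fun k : ℝ => -B / (2 * (A + Real.sqrt (A ^ 2 - B / k)))) atTop
        (nhds (-B / (2 * (A + A)))) := by
      have h1 : Tendsto (fun k : ℝ => A ^ 2 - B / k) atTop (nhds (A ^ 2)) := by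
        have := tendsto_const_nhds (x := A ^ 2) (f := atTop (α := ℝ))
        have h2 : Tendsto (fun k : ℝ => B / k) atTop (nhds 0) :=
          tendsto_const_nhds.div_atTop tendsto_id
        simpa using this.sub h2
      have h2 : Tendsto (fun k : ℝ => Real.sqrt (A ^ 2 - B / k)) atTop (nhds A) := by
        have := (Real.continuous_sqrt.tendsto (A ^ 2)).comp h1
        simpa [Real.sqrt_sq hApos.le, Function.comp_def] using this
      exact tendsto_const_nhds.div ((tendsto_const_nhds.add h2).const_mul 2)
        (by positivity)
    have hval : -B / (2 * (A + A)) = -(m * ξ * u₀ / (J₀ + m * ξ ^ 2)) := by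
      rw [hB, hA, hJ]
      have h1 : (0:ℝ) < J₀ + m * ξ ^ 2 := by positivity
      field_simp
      ring
    rw [← hval]
    exact hlim.congr' heq
  · -- l₃ limit
    have heq : (fun k : ℝ => (-A - Real.sqrt (A ^ 2 - B / k)) / 2) =ᶠ[atTop]
        (fun k => l₃ k / k) := by
      filter_upwards [hev] with k ⟨h1, hX⟩
      have hk0 : (0:ℝ) < k := lt_of_lt_of_le one_pos h1
      show (-A - Real.sqrt (A ^ 2 - B / k)) / 2 = l₃ k / k
      rw [hl₃, hsqrt k h1 hX, hb' k]
      field_simp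
    have h1 : Tendsto (fun k : ℝ => A ^ 2 - B / k) atTop (nhds (A ^ 2)) := by
      have h2 : Tendsto (fun k : ℝ => B / k) atTop (nhds 0) :=
        tendsto_const_nhds.div_atTop tendsto_id
      simpa using (tendsto_const_nhds (x := A ^ 2) (f := atTop (α := ℝ))).sub h2
    have h2 : Tendsto (fun k : ℝ => Real.sqrt (A ^ 2 - B / k)) atTop (nhds A) := by
      have := (Real.continuous_sqrt.tendsto (A ^ 2)).comp h1
      simpa [Real.sqrt_sq hApos.le, Function.comp_def] using this
    have hlim : Tendsto (fun k : ℝ => (-A - Real.sqrt (A ^ 2 - B / k)) / 2) atTop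
        (nhds ((-A - A) / 2)) := (tendsto_const_nhds.sub h2).div_const 2
    have hval : (-A - A) / 2 = -((J₀ + m * ξ ^ 2) / (J₀ * m)) := by
      rw [hA, hJ]; field_simp; ring
    rw [← hval]
    exact hlim.congr' heq
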